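/- Let τ > 0, S > 0, R > 0, and let m > 1 be an integer. For c > 0 set K̃_l(c) = max(0, 1 − (πl/τ)^m·c) and H_n(c) = (S/n)·∑_{l=1}^∞ (τ/(πl))²·(K̃_l(c)² − 1) + c²·R. With α*_n = ( (S/(nR))·(τ/π)·m/((2m−1)(m−1)) )^{m/(2m−1)} and Π_τ = (2m−1)·R·( (Sτ/(πR))·m/((2m−1)(m−1)) )^{2m/(2m−1)}, one has lim_{n→∞} n^{2m/(2m−1)} · H_n(α*_n) = −Π_τ. -/

import Mathlib

open Real Filter
open Finset

/-- The optimal shrinkage level `α*_n`. -/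
noncomputable def alphaStar (τ S R : ℝ) (m : ℕ) (n : ℕ) : ℝ :=
  (S/((n:ℝ)*R) * (τ/π) * (m:ℝ) / ((2*(m:ℝ)-1)*((m:ℝ)-1))) ^ ((m:ℝ)/(2*(m:ℝ)-1))

/-- The envelope `H_n(c) = (S/n) ∑_{l≥1} (τ/(πl))² (K̃_l(c)² - 1) + c² R` with
kernel weights `K̃_l(c) = max(0, 1 - (πl/τ)^m c)`. -/
noncomputable def Hn (τ S R : ℝ) (m : ℕ) (n : ℕ) (c : ℝ) : ℝ :=
  (S/(n:ℝ)) * ∑' l : ℕ, (τ/(π*(l+1)))^2 * ((max 0 (1 - (π*(l+1)/τ)^m * c))^2 - 1)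
    + c^2 * R

/-- The Pinsker-type second order constant `Π_τ`. -/
noncomputable def PiTau (τ S R : ℝ) (m : ℕ) : ℝ :=
  (2*(m:ℝ)-1) * R *
    ((S*τ/(π*R) * (m:ℝ) / ((2*(m:ℝ)-1)*((m:ℝ)-1))) ^ ((2*(m:ℝ))/(2*(m:ℝ)-1)))



lemma env_pow_sub_bounds (a : ℝ) (ha : 0 ≤ a) (k : ℕ) :
    ((k:ℝ)+1) * a^k ≤ (a+1)^(k+1) - a^(k+1) ∧
    (a+1)^(k+1) - a^(k+1) ≤ ((k:ℝ)+1) * (a+1)^k := by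
  have h1 : (a+1)^(k+1) - a^(k+1)
      = ∑ i ∈ range (k+1), (a+1)^i * a^(k - i) := by
    have h0 := geom_sum₂_mul (a+1) a (k+1)
    rw [show a+1-a = (1:ℝ) by ring, mul_one] at h0
    rw [← h0]
    apply Finset.sum_congr rfl
    intro i hi
    simp only [Finset.mem_range] at hi
    congr 2 <;> omega
  constructor
  · rw [h1]
    calc ((k:ℝ)+1) * a^k = ∑ _i ∈ range (k+1), a^k := by
          simp [mul_comm]
      _ ≤ _ := by
          apply Finset.sum_le_sum
          intro i hi
          simp only [Finset.mem_range] at hi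
          have : a^k = a^i * a^(k-i) := by rw [← pow_add]; congr 1; omega
          rw [this]
          gcongr
          linarith
  · rw [h1]
    calc ∑ i ∈ range (k+1), (a+1)^i * a^(k-i)
        ≤ ∑ _i ∈ range (k+1), (a+1)^k := by
          apply Finset.sum_le_sum
          intro i hi
          simp only [Finset.mem_range] at hi
          have : (a+1)^k = (a+1)^i * (a+1)^(k-i) := by rw [← pow_add]; congr 1; omega
          rw [this]
          gcongr
          linarith
      _ = ((k:ℝ)+1) * (a+1)^k := by simp [mul_comm]

lemma env_sum_pow_bounds (k N : ℕ) :
    (N:ℝ)^(k+1) ≤ ((k:ℝ)+1) * ∑ j ∈ range N, ((j:ℝ)+1)^k ∧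
    ((k:ℝ)+1) * ∑ j ∈ range N, ((j:ℝ)+1)^k ≤ ((N:ℝ)+1)^(k+1) := by
  constructor
  · have h : (N:ℝ)^(k+1) = ∑ j ∈ range N, (((j:ℝ)+1)^(k+1) - (j:ℝ)^(k+1)) := by
      induction N with
      | zero => simp
      | succ M ih => rw [Finset.sum_range_succ, ← ih]; push_cast; ring
    rw [h, Finset.mul_sum]
    apply Finset.sum_le_sum
    intro j _
    exact (env_pow_sub_bounds (j:ℝ) (by positivity) k).2
  · have h : ∑ j ∈ range N, (((j:ℝ)+1+1)^(k+1) - ((j:ℝ)+1)^(k+1))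
        = ((N:ℝ)+1)^(k+1) - 1 := by
      induction N with
      | zero => simp
      | succ M ih => rw [Finset.sum_range_succ, ih]; push_cast; ring
    have h2 : ((k:ℝ)+1) * ∑ j ∈ range N, ((j:ℝ)+1)^k
        ≤ ∑ j ∈ range N, (((j:ℝ)+1+1)^(k+1) - ((j:ℝ)+1)^(k+1)) := by
      rw [Finset.mul_sum]
      apply Finset.sum_le_sum
      intro j _
      exact (env_pow_sub_bounds ((j:ℝ)+1) (by positivity) k).1
    rw [h] at h2
    linarith

lemma env_tendsto_sum_pow (k : ℕ) :
    Tendsto (fun N : ℕ => (∑ j ∈ range N, ((j:ℝ)+1)^k) / (N:ℝ)^(k+1)) atTop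
      (nhds (1/((k:ℝ)+1))) := by
  have hk : (0:ℝ) < (k:ℝ)+1 := by positivity
  have hup : Tendsto (fun N : ℕ => (((N:ℝ)+1)/(N:ℝ))^(k+1) / ((k:ℝ)+1)) atTop
      (nhds (1/((k:ℝ)+1))) := by
    have h1 : Tendsto (fun N : ℕ => ((N:ℝ)+1)/(N:ℝ)) atTop (nhds 1) := by
      have : Tendsto (fun N : ℕ => 1 + 1/(N:ℝ)) atTop (nhds (1+0)) :=
        tendsto_const_nhds.add (tendsto_one_div_atTop_nhds_zero_nat)
      rw [add_zero] at this
      apply this.congr'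
      filter_upwards [eventually_ge_atTop 1] with N hN
      have : (N:ℝ) ≠ 0 := by positivity
      field_simp
    have := (h1.pow (k+1)).div_const ((k:ℝ)+1)
    simpa using this
  apply tendsto_of_tendsto_of_tendsto_of_le_of_le' (tendsto_const_nhds) hup
  · filter_upwards [eventually_ge_atTop 1] with N hN
    have hN0 : (0:ℝ) < (N:ℝ) := by exact_mod_cast hN
    rw [div_le_div_iff₀ hk (by positivity)]
    calc (1:ℝ) * (N:ℝ)^(k+1) = (N:ℝ)^(k+1) := by ring
      _ ≤ ((k:ℝ)+1) * ∑ j ∈ range N, ((j:ℝ)+1)^k := (env_sum_pow_bounds k N).1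
      _ = (∑ j ∈ range N, ((j:ℝ)+1)^k) * ((k:ℝ)+1) := by ring
  · filter_upwards [eventually_ge_atTop 1] with N hN
    have hN0 : (0:ℝ) < (N:ℝ) := by exact_mod_cast hN
    rw [div_le_div_iff₀ (by positivity) hk, div_pow, div_mul_eq_mul_div,
      le_div_iff₀ (by positivity)]
    calc (∑ j ∈ range N, ((j:ℝ)+1)^k) * ((k:ℝ)+1) * (N:ℝ)^(k+1)
        ≤ ((N:ℝ)+1)^(k+1) * (N:ℝ)^(k+1) := by
          have := (env_sum_pow_bounds k N).2
          nlinarith [pow_pos hN0 (k+1)]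
      _ = ((N:ℝ)+1)^(k+1) * (N:ℝ)^(k+1) := rfl


lemma env_telescope_hasSum (a : ℝ) (ha : 0 < a) :
    HasSum (fun l : ℕ => 1/(a+l) - 1/(a+l+1)) (1/a) := by
  have hpos : ∀ l : ℕ, (0:ℝ) < a + l := fun l => by positivity
  rw [hasSum_iff_tendsto_nat_of_nonneg]
  · have hsum : ∀ n : ℕ, ∑ l ∈ range n, (1/(a+l) - 1/(a+l+1)) = 1/a - 1/(a+n) := by
      intro n
      induction n with
      | zero => simp
      | succ M ih => rw [Finset.sum_range_succ, ih]; push_cast; ring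
    simp only [hsum]
    have h0 : Tendsto (fun n : ℕ => 1/(a+n)) atTop (nhds 0) := by
      have hat : Tendsto (fun n : ℕ => a + (n:ℝ)) atTop atTop :=
        tendsto_atTop_add_const_left _ a tendsto_natCast_atTop_atTop
      have := (tendsto_inv_atTop_zero (𝕜 := ℝ)).comp hat
      exact this.congr (fun n => (one_div _).symm)
    have := (tendsto_const_nhds (x := 1/a) (f := atTop (α := ℕ))).sub h0
    simpa using this
  · intro l
    have h1 : (0:ℝ) < a + l := hpos l
    have h2 : a + (l:ℝ) ≤ a + l + 1 := by linarith
    simp only [sub_nonneg]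
    exact one_div_le_one_div_of_le h1 h2

noncomputable def envTail (N : ℕ) : ℝ := ∑' l : ℕ, (1/((N:ℝ)+l+1))^2

lemma env_term_le (N : ℕ) : ∀ l : ℕ,
    (1/((N:ℝ)+l+1))^2 ≤ 1/((N:ℝ)+1/2+l) - 1/((N:ℝ)+1/2+l+1) := by
  intro l
  have h1 : (0:ℝ) < (N:ℝ)+1/2+l := by positivity
  have h2 : (0:ℝ) < (N:ℝ)+1/2+l+1 := by positivity
  have h3 : (0:ℝ) < (N:ℝ)+l+1 := by positivity
  rw [div_sub_div _ _ (ne_of_gt h1) (ne_of_gt h2), div_pow]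
  rw [div_le_div_iff₀ (by positivity) (by positivity)]
  ring_nf
  nlinarith [sq_nonneg ((N:ℝ)+l)]

lemma env_tail_summable (N : ℕ) : Summable (fun l : ℕ => (1/((N:ℝ)+l+1))^2) := by
  apply Summable.of_nonneg_of_le (fun l => by positivity) (env_term_le N)
  exact (env_telescope_hasSum ((N:ℝ)+1/2) (by positivity)).summable

lemma env_tail_le (N : ℕ) : envTail N ≤ 1/((N:ℝ)+1/2) := by
  rw [envTail, ← (env_telescope_hasSum ((N:ℝ)+1/2) (by positivity)).tsum_eq]
  exact Summable.tsum_le_tsum (env_term_le N) (env_tail_summable N)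
    (env_telescope_hasSum ((N:ℝ)+1/2) (by positivity)).summable

lemma env_le_tail (N : ℕ) : 1/((N:ℝ)+1) ≤ envTail N := by
  rw [envTail, ← (env_telescope_hasSum ((N:ℝ)+1) (by positivity)).tsum_eq]
  apply Summable.tsum_le_tsum _ (env_telescope_hasSum ((N:ℝ)+1) (by positivity)).summable
    (env_tail_summable N)
  intro l
  have h1 : (0:ℝ) < (N:ℝ)+1+l := by positivity
  have h2 : (0:ℝ) < (N:ℝ)+1+l+1 := by positivity
  rw [div_sub_div _ _ (ne_of_gt h1) (ne_of_gt h2), div_pow]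
  rw [div_le_div_iff₀ (by positivity) (by positivity)]
  nlinarith [sq_nonneg ((N:ℝ)+l)]

lemma env_tail_nonneg (N : ℕ) : 0 ≤ envTail N :=
  tsum_nonneg (fun l => by positivity)

lemma env_rpow_inv (c : ℝ) (hc : 0 < c) (m : ℕ) (hm : m ≠ 0) :
    (c^(-(1:ℝ)/(m:ℝ)))^m = c⁻¹ := by
  have hm0 : (m:ℝ) ≠ 0 := Nat.cast_ne_zero.mpr hm
  rw [← Real.rpow_natCast (c^(-(1:ℝ)/(m:ℝ))) m, ← Real.rpow_mul hc.le,
    show (-(1:ℝ)/(m:ℝ))*(m:ℝ) = -1 by field_simp, Real.rpow_neg_one]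




lemma env_summable (τ c : ℝ) (hτ : 0 < τ) (hc : 0 < c) (m : ℕ) :
    Summable (fun l : ℕ =>
      (τ/(π*(l+1)))^2 * ((max 0 (1 - (π*(l+1)/τ)^m * c))^2 - 1)) := by
  have hπ := Real.pi_pos
  apply Summable.of_norm_bounded (g := fun l : ℕ => (τ/π)^2 * (1/((l:ℝ)+1))^2)
  · apply Summable.mul_left
    apply (env_tail_summable 0).congr
    intro l
    push_cast
    ring_nf
  · intro l
    have hy : (0:ℝ) < (l:ℝ)+1 := by positivity
    have hx : (0:ℝ) ≤ (π*(l+1)/τ)^m * c := by positivity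
    set K : ℝ := max 0 (1 - (π*(l+1)/τ)^m * c) with hK
    have hK0 : 0 ≤ K := le_max_left _ _
    have hK1 : K ≤ 1 := max_le (by norm_num) (by linarith)
    rw [norm_mul, Real.norm_eq_abs, Real.norm_eq_abs,
      abs_of_nonneg (by positivity : (0:ℝ) ≤ (τ/(π*(l+1)))^2)]
    have habs : |K^2 - 1| ≤ 1 := abs_le.mpr ⟨by nlinarith, by nlinarith⟩
    calc (τ/(π*((l:ℝ)+1)))^2 * |K^2-1| ≤ (τ/(π*((l:ℝ)+1)))^2 * 1 := by
          apply mul_le_mul_of_nonneg_left habs (by positivity)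
      _ = (τ/π)^2 * (1/((l:ℝ)+1))^2 := by
          rw [mul_one]; field_simp
lemma env_sigma_closed (τ c : ℝ) (hτ : 0 < τ) (hc : 0 < c) (m : ℕ) (hm : 2 ≤ m) :
    (∑' l : ℕ, (τ/(π*(l+1)))^2 * ((max 0 (1 - (π*(l+1)/τ)^m * c))^2 - 1))
    = c^2*(π/τ)^(2*m-2) *
        (∑ l ∈ Finset.range ⌊τ/π * c^(-(1:ℝ)/(m:ℝ))⌋₊, ((l:ℝ)+1)^(2*m-2))
      - 2*c*(π/τ)^(m-2) *
        (∑ l ∈ Finset.range ⌊τ/π * c^(-(1:ℝ)/(m:ℝ))⌋₊, ((l:ℝ)+1)^(m-2))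
      - (τ/π)^2 * envTail ⌊τ/π * c^(-(1:ℝ)/(m:ℝ))⌋₊ := by
  have hπ := Real.pi_pos
  have hm0 : (m:ℝ) ≠ 0 := by positivity
  set N := ⌊τ/π * c^(-(1:ℝ)/(m:ℝ))⌋₊ with hNdef
  have hpowc : (c^(-(1:ℝ)/(m:ℝ)))^m = c⁻¹ := by
    rw [← Real.rpow_natCast (c^(-(1:ℝ)/(m:ℝ))) m, ← Real.rpow_mul hc.le,
      show (-(1:ℝ)/(m:ℝ))*(m:ℝ) = -1 by field_simp, Real.rpow_neg_one]
  have hcpos' : (0:ℝ) ≤ c^(-(1:ℝ)/(m:ℝ)) := (Real.rpow_pos_of_pos hc _).le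
  rw [← Summable.sum_add_tsum_nat_add N (env_summable τ c hτ hc m)]
  have htail2 : (∑' l : ℕ, (τ/(π*(((l+N:ℕ):ℝ)+1)))^2 *
      ((max 0 (1 - (π*(((l+N:ℕ):ℝ)+1)/τ)^m * c))^2 - 1))
      = -((τ/π)^2 * envTail N) := by
    have hterm : ∀ l : ℕ, (τ/(π*(((l+N:ℕ):ℝ)+1)))^2 *
        ((max 0 (1 - (π*(((l+N:ℕ):ℝ)+1)/τ)^m * c))^2 - 1)
        = -((τ/π)^2 * (1/((N:ℝ)+l+1))^2) := by
      intro l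
      have hy : ((l+N:ℕ):ℝ)+1 = (N:ℝ)+l+1 := by push_cast; ring
      have hflt : τ/π * c^(-(1:ℝ)/(m:ℝ)) < (N:ℝ)+1 := Nat.lt_floor_add_one _
      have hNy : (N:ℝ)+1 ≤ (N:ℝ)+l+1 := by
        have : (0:ℝ) ≤ l := Nat.cast_nonneg l
        linarith
      have hlt : c^(-(1:ℝ)/(m:ℝ)) < π*((N:ℝ)+l+1)/τ := by
        rw [lt_div_iff₀ hτ]
        calc c^(-(1:ℝ)/(m:ℝ)) * τ = (τ/π * c^(-(1:ℝ)/(m:ℝ))) * π := by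
              field_simp
          _ < ((N:ℝ)+l+1) * π := by
              apply mul_lt_mul_of_pos_right _ hπ
              linarith
          _ = π*((N:ℝ)+l+1) := by ring
      have hxge : (1:ℝ) ≤ (π*((N:ℝ)+l+1)/τ)^m * c := by
        have h1 : (c^(-(1:ℝ)/(m:ℝ)))^m ≤ (π*((N:ℝ)+l+1)/τ)^m :=
          pow_le_pow_left₀ hcpos' hlt.le m
        rw [hpowc] at h1
        calc (1:ℝ) = c⁻¹ * c := by field_simp
          _ ≤ (π*((N:ℝ)+l+1)/τ)^m * c := by
              apply mul_le_mul_of_nonneg_right h1 hc.le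
      rw [hy, max_eq_left (by linarith)]
      have hy0 : (N:ℝ)+l+1 > 0 := by positivity
      field_simp
      ring
    rw [tsum_congr hterm, tsum_neg, tsum_mul_left]
    rfl
  have hfin : ∀ l ∈ Finset.range N,
      (τ/(π*((l:ℝ)+1)))^2 * ((max 0 (1 - (π*((l:ℝ)+1)/τ)^m * c))^2 - 1)
      = c^2*(π/τ)^(2*m-2)*((l:ℝ)+1)^(2*m-2) - 2*c*(π/τ)^(m-2)*((l:ℝ)+1)^(m-2) := by
    intro l hl
    simp only [Finset.mem_range] at hl
    have hfl : (τ/π * c^(-(1:ℝ)/(m:ℝ))) ≥ 0 := by positivity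
    have hle : ((l:ℝ)+1) ≤ τ/π * c^(-(1:ℝ)/(m:ℝ)) := by
      have h1 : ((l:ℝ)+1) ≤ (N:ℝ) := by exact_mod_cast Nat.succ_le_of_lt hl
      exact h1.trans (Nat.floor_le hfl)
    have hy0 : (0:ℝ) < (l:ℝ)+1 := by positivity
    have hlt : π*((l:ℝ)+1)/τ ≤ c^(-(1:ℝ)/(m:ℝ)) := by
      rw [div_le_iff₀ hτ]
      calc π*((l:ℝ)+1) = ((l:ℝ)+1) * π := by ring
        _ ≤ (τ/π * c^(-(1:ℝ)/(m:ℝ))) * π := by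
            apply mul_le_mul_of_nonneg_right hle hπ.le
        _ = c^(-(1:ℝ)/(m:ℝ)) * τ := by field_simp
    have hxle : (π*((l:ℝ)+1)/τ)^m * c ≤ 1 := by
      have h1 : (π*((l:ℝ)+1)/τ)^m ≤ (c^(-(1:ℝ)/(m:ℝ)))^m :=
        pow_le_pow_left₀ (by positivity) hlt m
      rw [hpowc] at h1
      calc (π*((l:ℝ)+1)/τ)^m * c ≤ c⁻¹ * c := by
            apply mul_le_mul_of_nonneg_right h1 hc.le
        _ = 1 := by field_simp
    have hxnn : (0:ℝ) ≤ (π*((l:ℝ)+1)/τ)^m * c := by positivity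
    rw [max_eq_right (by linarith : (0:ℝ) ≤ 1 - (π*((l:ℝ)+1)/τ)^m * c)]
    obtain ⟨k, rfl⟩ : ∃ k, m = k + 2 := ⟨m - 2, by omega⟩
    have e1 : k+2-2 = k := by omega
    have e2 : 2*(k+2)-2 = 2*k+2 := by omega
    rw [e1, e2]
    simp only [div_pow, mul_pow]
    field_simp
    ring
  rw [Finset.sum_congr rfl hfin]
  have hsplit : ∑ l ∈ Finset.range N,
      (c^2*(π/τ)^(2*m-2)*((l:ℝ)+1)^(2*m-2) - 2*c*(π/τ)^(m-2)*((l:ℝ)+1)^(m-2))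
      = c^2*(π/τ)^(2*m-2) * (∑ l ∈ Finset.range N, ((l:ℝ)+1)^(2*m-2))
        - 2*c*(π/τ)^(m-2) * (∑ l ∈ Finset.range N, ((l:ℝ)+1)^(m-2)) := by
    rw [Finset.sum_sub_distrib, Finset.mul_sum, Finset.mul_sum]
  rw [hsplit]
  have hbeta : (∑' l : ℕ, (fun l : ℕ =>
      (τ/(π*((l:ℝ)+1)))^2 * ((max 0 (1 - (π*((l:ℝ)+1)/τ)^m * c))^2 - 1)) (l+N))
      = -((τ/π)^2 * envTail N) := htail2
  rw [hbeta]
  ring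

noncomputable def envD (τ S R : ℝ) (k n : ℕ) : ℝ :=
  (alphaStar τ S R (k+2) n)^(-(1:ℝ)/(((k+2:ℕ)):ℝ))

noncomputable def envT (τ S R : ℝ) (k n : ℕ) : ℝ := τ/π * envD τ S R k n

noncomputable def envN (τ S R : ℝ) (k n : ℕ) : ℕ := ⌊envT τ S R k n⌋₊

set_option maxHeartbeats 1000000 in
/-- The shrinkage level `α*_n` attains the second order constant:
`n^{2m/(2m-1)} H_n(α*_n) → -Π_τ` as `n → ∞`. -/
theorem envelope_attains_pinsker_constant
    (τ S R : ℝ) (hτ : 0 < τ) (hS : 0 < S) (hR : 0 < R) (m : ℕ) (hm : 1 < m) :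
    Tendsto (fun n : ℕ =>
        (n:ℝ) ^ ((2*(m:ℝ))/(2*(m:ℝ)-1)) * Hn τ S R m n (alphaStar τ S R m n))
      atTop (nhds (-(PiTau τ S R m))) := by
  have hπ := Real.pi_pos
  obtain ⟨k, rfl⟩ : ∃ k, m = k + 2 := ⟨m - 2, by omega⟩
  have hcast : ((k+2:ℕ):ℝ) = (k:ℝ)+2 := by push_cast; ring
  have hkr : (0:ℝ) ≤ (k:ℝ) := Nat.cast_nonneg k
  have h2m1 : (0:ℝ) < 2*((k:ℝ)+2) - 1 := by linarith
  have hm1 : (0:ℝ) < ((k:ℝ)+2) - 1 := by linarith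
  simp only [hcast]
  set A : ℝ := S/R*(τ/π)*((k:ℝ)+2)/((2*((k:ℝ)+2)-1)*(((k:ℝ)+2)-1)) with hAdef
  have hApos : 0 < A := by
    apply div_pos
    · exact mul_pos (mul_pos (div_pos hS hR) (div_pos hτ hπ)) (by linarith)
    · exact mul_pos h2m1 hm1
  set q : ℝ := 1/(2*((k:ℝ)+2)-1) with hqdef
  have hqpos : 0 < q := one_div_pos.mpr h2m1
  set e : ℝ := 2*((k:ℝ)+2)/(2*((k:ℝ)+2)-1) with hedef
  set μ : ℝ := ((k:ℝ)+2)/(2*((k:ℝ)+2)-1) with hμdef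
  -- basic facts about alphaStar
  have hc_eq : ∀ n : ℕ, 1 ≤ n → alphaStar τ S R (k+2) n = (A/(n:ℝ))^μ := by
    intro n hn
    have hn0 : (n:ℝ) ≠ 0 := by
      have : (1:ℝ) ≤ (n:ℝ) := by exact_mod_cast hn
      linarith
    simp only [alphaStar, hcast]
    congr 1
    rw [hAdef]
    field_simp
  have hcpos : ∀ n : ℕ, 1 ≤ n → 0 < alphaStar τ S R (k+2) n := by
    intro n hn
    rw [hc_eq n hn]
    have hn0 : (0:ℝ) < (n:ℝ) := by exact_mod_cast Nat.lt_of_lt_of_le Nat.zero_lt_one hn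
    exact Real.rpow_pos_of_pos (div_pos hApos hn0) _
  -- D, T, N
  have hD_eq : ∀ n : ℕ, 1 ≤ n → envD τ S R k n = ((n:ℝ)/A)^q := by
    intro n hn
    have hn0 : (0:ℝ) < (n:ℝ) := by exact_mod_cast Nat.lt_of_lt_of_le Nat.zero_lt_one hn
    rw [envD, hc_eq n hn, hcast, ← Real.rpow_mul (by positivity)]
    rw [show μ * (-(1:ℝ)/((k:ℝ)+2)) = -q by rw [hμdef, hqdef]; field_simp]
    rw [Real.rpow_neg (by positivity), ← Real.inv_rpow (by positivity), inv_div]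
  have hD_pos : ∀ n : ℕ, 1 ≤ n → 0 < envD τ S R k n := by
    intro n hn
    rw [envD]
    exact Real.rpow_pos_of_pos (hcpos n hn) _
  have hT_pos : ∀ n : ℕ, 1 ≤ n → 0 < envT τ S R k n := by
    intro n hn
    exact mul_pos (div_pos hτ hπ) (hD_pos n hn)
  have hnq : ∀ n : ℕ, 1 ≤ n → (n:ℝ)^q = A^q * envD τ S R k n := by
    intro n hn
    have hn0 : (0:ℝ) < (n:ℝ) := by exact_mod_cast Nat.lt_of_lt_of_le Nat.zero_lt_one hn
    rw [hD_eq n hn, ← Real.mul_rpow hApos.le (by positivity)]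
    congr 1
    field_simp
  have hD1 : ∀ n : ℕ, 1 ≤ n →
      (envD τ S R k n)^(k+2) * alphaStar τ S R (k+2) n = 1 := by
    intro n hn
    rw [envD, env_rpow_inv _ (hcpos n hn) (k+2) (by omega)]
    exact inv_mul_cancel₀ (hcpos n hn).ne'
  -- limits of T and N
  have hT_at : Tendsto (envT τ S R k) atTop atTop := by
    have h1 : Tendsto (fun n : ℕ => (n:ℝ)/A) atTop atTop :=
      tendsto_natCast_atTop_atTop.atTop_div_const hApos
    have h2 := (tendsto_rpow_atTop hqpos).comp h1
    have h3 := h2.const_mul_atTop (div_pos hτ hπ)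
    apply h3.congr'
    filter_upwards [eventually_ge_atTop 1] with n hn
    rw [envT, hD_eq n hn]
    rfl
  have hN_at : Tendsto (fun n => envN τ S R k n) atTop atTop :=
    (tendsto_nat_floor_atTop (α := ℝ)).comp hT_at
  have hNT : Tendsto (fun n => ((envN τ S R k n : ℝ))/envT τ S R k n) atTop (nhds 1) :=
    tendsto_nat_floor_div_atTop.comp hT_at
  have hinvT : Tendsto (fun n => (envT τ S R k n)⁻¹) atTop (nhds 0) :=
    tendsto_inv_atTop_zero.comp hT_at
  have hfrac : ∀ s : ℝ, Tendsto
      (fun n => envT τ S R k n/((envN τ S R k n : ℝ)+s)) atTop (nhds 1) := by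
    intro s
    have h1 : Tendsto (fun n => ((envN τ S R k n : ℝ)+s)/envT τ S R k n) atTop
        (nhds 1) := by
      have h2 := hNT.add (hinvT.const_mul s)
      rw [mul_zero, add_zero] at h2
      apply h2.congr
      intro n
      rw [add_div, div_eq_mul_inv s]
    have h3 := h1.inv₀ one_ne_zero
    rw [inv_one] at h3
    apply h3.congr
    intro n
    rw [inv_div]
  have hTtail : Tendsto (fun n => envT τ S R k n * envTail (envN τ S R k n)) atTop
      (nhds 1) := by
    apply tendsto_of_tendsto_of_tendsto_of_le_of_le' (hfrac 1) (hfrac (1/2))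
    · filter_upwards [eventually_ge_atTop 1] with n hn
      calc envT τ S R k n/((envN τ S R k n : ℝ)+1)
          = envT τ S R k n * (1/((envN τ S R k n : ℝ)+1)) := by rw [mul_one_div]
        _ ≤ envT τ S R k n * envTail (envN τ S R k n) :=
            mul_le_mul_of_nonneg_left (env_le_tail _) (hT_pos n hn).le
    · filter_upwards [eventually_ge_atTop 1] with n hn
      calc envT τ S R k n * envTail (envN τ S R k n)
          ≤ envT τ S R k n * (1/((envN τ S R k n : ℝ)+1/2)) :=
            mul_le_mul_of_nonneg_left (env_tail_le _) (hT_pos n hn).le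
        _ = envT τ S R k n/((envN τ S R k n : ℝ)+1/2) := by rw [mul_one_div]
  -- component limits
  have hU : Tendsto (fun n => (((envN τ S R k n):ℝ)/envT τ S R k n)^(2*k+2+1) *
      ((∑ j ∈ range (envN τ S R k n), ((j:ℝ)+1)^(2*k+2))/((envN τ S R k n):ℝ)^(2*k+2+1)))
      atTop (nhds (1/(2*(k:ℝ)+3))) := by
    have h := (hNT.pow (2*k+2+1)).mul ((env_tendsto_sum_pow (2*k+2)).comp hN_at)
    rw [one_pow, one_mul] at h
    have h2 : (1:ℝ)/((((2*k+2:ℕ)):ℝ)+1) = 1/(2*(k:ℝ)+3) := by push_cast; ring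
    rw [h2] at h
    exact h
  have hV : Tendsto (fun n => (((envN τ S R k n):ℝ)/envT τ S R k n)^(k+1) *
      ((∑ j ∈ range (envN τ S R k n), ((j:ℝ)+1)^k)/((envN τ S R k n):ℝ)^(k+1)))
      atTop (nhds (1/((k:ℝ)+1))) := by
    have h := (hNT.pow (k+1)).mul ((env_tendsto_sum_pow k).comp hN_at)
    rw [one_pow, one_mul] at h
    exact h
  have hSig : Tendsto (fun n => (τ/π)*((((envN τ S R k n):ℝ)/envT τ S R k n)^(2*k+2+1)*((∑ j ∈ range (envN τ S R k n), ((j:ℝ)+1)^(2*k+2))/((envN τ S R k n):ℝ)^(2*k+2+1))) - 2*((τ/π)*((((envN τ S R k n):ℝ)/envT τ S R k n)^(k+1)*((∑ j ∈ range (envN τ S R k n), ((j:ℝ)+1)^k)/((envN τ S R k n):ℝ)^(k+1)))) - (τ/π)*(envT τ S R k n*envTail (envN τ S R k n)))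
      atTop (nhds ((τ/π)*(1/(2*(k:ℝ)+3)) - 2*((τ/π)*(1/((k:ℝ)+1))) - (τ/π)*1)) :=
    ((hU.const_mul (τ/π)).sub ((hV.const_mul (τ/π)).const_mul 2)).sub
      (hTtail.const_mul (τ/π))
  have hG : Tendsto (fun n => S*(A^q*((τ/π)*((((envN τ S R k n):ℝ)/envT τ S R k n)^(2*k+2+1)*((∑ j ∈ range (envN τ S R k n), ((j:ℝ)+1)^(2*k+2))/((envN τ S R k n):ℝ)^(2*k+2+1))) - 2*((τ/π)*((((envN τ S R k n):ℝ)/envT τ S R k n)^(k+1)*((∑ j ∈ range (envN τ S R k n), ((j:ℝ)+1)^k)/((envN τ S R k n):ℝ)^(k+1)))) - (τ/π)*(envT τ S R k n*envTail (envN τ S R k n)))) + R*A^e) atTop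
      (nhds (S*(A^q*((τ/π)*(1/(2*(k:ℝ)+3)) - 2*((τ/π)*(1/((k:ℝ)+1))) - (τ/π)*1)) + R*A^e)) :=
    ((hSig.const_mul (A^q)).const_mul S).add tendsto_const_nhds
  have he1 : e = 1 + q := by rw [hedef, hqdef]; field_simp; ring
  have hAe : A^e = A*A^q := by rw [he1, Real.rpow_add hApos, Real.rpow_one]
  -- final constant identity
  have hconst : S*(A^q*((τ/π)*(1/(2*(k:ℝ)+3)) - 2*((τ/π)*(1/((k:ℝ)+1))) - (τ/π)*1)) + R*A^e
      = -(PiTau τ S R (k+2)) := by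
    simp only [PiTau, hcast]
    rw [show S*τ/(π*R)*((k:ℝ)+2)/((2*((k:ℝ)+2)-1)*(((k:ℝ)+2)-1)) = A from by
      rw [hAdef]; ring]
    rw [← hedef, hAe]
    generalize A^q = X
    rw [hAdef]
    have hk1 : ((k:ℝ)+1) ≠ 0 := by positivity
    have hk3 : (2*(k:ℝ)+3) ≠ 0 := by positivity
    field_simp
    ring
  -- eventual equality
  have Ev : ∀ᶠ n : ℕ in atTop, (n:ℝ)^e * Hn τ S R (k+2) n (alphaStar τ S R (k+2) n)
      = S*(A^q*((τ/π)*((((envN τ S R k n):ℝ)/envT τ S R k n)^(2*k+2+1)*((∑ j ∈ range (envN τ S R k n), ((j:ℝ)+1)^(2*k+2))/((envN τ S R k n):ℝ)^(2*k+2+1))) - 2*((τ/π)*((((envN τ S R k n):ℝ)/envT τ S R k n)^(k+1)*((∑ j ∈ range (envN τ S R k n), ((j:ℝ)+1)^k)/((envN τ S R k n):ℝ)^(k+1)))) - (τ/π)*(envT τ S R k n*envTail (envN τ S R k n)))) + R*A^e := by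
    filter_upwards [eventually_ge_atTop 1, hN_at.eventually_ge_atTop 1] with n hn hNn
    have hn0 : (0:ℝ) < (n:ℝ) := by exact_mod_cast Nat.lt_of_lt_of_le Nat.zero_lt_one hn
    have hcp := hcpos n hn
    have hDp := hD_pos n hn
    have hTp := hT_pos n hn
    have hNr : (0:ℝ) < ((envN τ S R k n):ℝ) := by
      exact_mod_cast Nat.lt_of_lt_of_le Nat.zero_lt_one hNn
    simp only [Hn]
    rw [env_sigma_closed τ _ hτ hcp (k+2) (by omega)]
    rw [show ⌊τ/π * (alphaStar τ S R (k+2) n)^(-(1:ℝ)/(((k+2:ℕ)):ℝ))⌋₊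
      = envN τ S R k n from rfl]
    rw [show (k+2)-2 = k from by omega, show 2*(k+2)-2 = 2*k+2 from by omega]
    have hne : (n:ℝ)^e = (n:ℝ) * (n:ℝ)^q := by
      rw [he1, Real.rpow_add hn0, Real.rpow_one]
    have hc2 : (n:ℝ)^e * (alphaStar τ S R (k+2) n)^2 = A^e := by
      rw [hc_eq n hn, ← Real.rpow_natCast ((A/(n:ℝ))^μ) 2,
        ← Real.rpow_mul (by positivity)]
      rw [show μ*((2:ℕ):ℝ) = e from by rw [hμdef, hedef]; push_cast; ring]
      rw [← Real.mul_rpow hn0.le (by positivity)]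
      rw [show (n:ℝ)*(A/(n:ℝ)) = A from by field_simp]
    have hcD : alphaStar τ S R (k+2) n = ((envD τ S R k n)^(k+2))⁻¹ :=
      eq_inv_of_mul_eq_one_right (hD1 n hn)
    have hmain : envD τ S R k n * ((alphaStar τ S R (k+2) n)^2*(π/τ)^(2*k+2)*
        (∑ l ∈ Finset.range (envN τ S R k n), ((l:ℝ)+1)^(2*k+2))
        - 2*(alphaStar τ S R (k+2) n)*(π/τ)^k*
        (∑ l ∈ Finset.range (envN τ S R k n), ((l:ℝ)+1)^k)
        - (τ/π)^2*envTail (envN τ S R k n)) = (τ/π)*((((envN τ S R k n):ℝ)/envT τ S R k n)^(2*k+2+1)*((∑ j ∈ range (envN τ S R k n), ((j:ℝ)+1)^(2*k+2))/((envN τ S R k n):ℝ)^(2*k+2+1))) - 2*((τ/π)*((((envN τ S R k n):ℝ)/envT τ S R k n)^(k+1)*((∑ j ∈ range (envN τ S R k n), ((j:ℝ)+1)^k)/((envN τ S R k n):ℝ)^(k+1)))) - (τ/π)*(envT τ S R k n*envTail (envN τ S R k n)) := by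
      rw [hcD, show envT τ S R k n = τ/π * envD τ S R k n from rfl]
      set Dv := envD τ S R k n with hDv
      set Nv := ((envN τ S R k n):ℝ) with hNv
      set P2v := ∑ j ∈ range (envN τ S R k n), ((j:ℝ)+1)^(2*k+2) with hP2v
      set P1v := ∑ j ∈ range (envN τ S R k n), ((j:ℝ)+1)^k with hP1v
      set tv := envTail (envN τ S R k n) with htv
      have hDv0 : Dv ≠ 0 := hDp.ne'
      have hNv0 : Nv ≠ 0 := hNr.ne'
      have hτ0 : τ ≠ 0 := hτ.ne'
      have hπ0 : π ≠ 0 := hπ.ne'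
      simp only [div_pow, mul_pow, inv_pow, ← pow_mul]
      field_simp
      ring
    rw [mul_add]
    congr 1
    · rw [hne, hnq n hn, ← hmain]
      have hgen : ∀ Z : ℝ, ((n:ℝ)*(A^q*envD τ S R k n))*((S/(n:ℝ))*Z)
          = S*(A^q*(envD τ S R k n*Z)) := by
        intro Z
        field_simp
      exact hgen _
    · rw [← hc2]; ring
  rw [← hconst]
  exact Tendsto.congr' (Filter.EventuallyEq.symm Ev) hG
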